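/- Let d ≥ 1, τ > 0, R > 0, and let ν be a probability measure on ℝ^d supported in [−R,R]^d. Then the score s_{ν,τ} is globally Lipschitz on ℝ^d with Lipschitz constant at most 1/τ² + R²d/τ⁴; equivalently, the operator norm of its Jacobian satisfies ‖∇ s_{ν,τ}(x)‖_op ≤ 1/τ² + R²d/τ⁴ for every x ∈ ℝ^d. -/

import Mathlib

open MeasureTheory

/-- Density of `N(0, τ² I_d)` on `ℝ^d`. -/
noncomputable def gphi (d : ℕ) (τ : ℝ) (z : EuclideanSpace ℝ (Fin d)) : ℝ :=
  (2 * Real.pi * τ ^ 2) ^ (-(d : ℝ) / 2) * Real.exp (-‖z‖ ^ 2 / (2 * τ ^ 2))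

/-- Density of `ν * N(0, τ² I_d)`. -/
noncomputable def pdens (d : ℕ) (τ : ℝ) (ν : Measure (EuclideanSpace ℝ (Fin d)))
    (x : EuclideanSpace ℝ (Fin d)) : ℝ :=
  ∫ y, gphi d τ (x - y) ∂ν

/-- Score `∇ log p_{ν,τ}`. -/
noncomputable def score (d : ℕ) (τ : ℝ) (ν : Measure (EuclideanSpace ℝ (Fin d)))
    (x : EuclideanSpace ℝ (Fin d)) : EuclideanSpace ℝ (Fin d) :=
  gradient (fun z => Real.log (pdens d τ ν z)) x

namespace ScoreAux

noncomputable def gc (d : ℕ) (τ : ℝ) : ℝ := (2 * Real.pi * τ ^ 2) ^ (-(d : ℝ) / 2)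

variable {d : ℕ} {τ : ℝ}

lemma gc_pos (hτ : 0 < τ) : 0 < gc d τ :=
  Real.rpow_pos_of_pos (by positivity) _

lemma gphi_pos (hτ : 0 < τ) (z : EuclideanSpace ℝ (Fin d)) : 0 < gphi d τ z :=
  mul_pos (gc_pos hτ) (Real.exp_pos _)

lemma gphi_le (hτ : 0 < τ) (z : EuclideanSpace ℝ (Fin d)) : gphi d τ z ≤ gc d τ := by
  have h1 : Real.exp (-‖z‖ ^ 2 / (2 * τ ^ 2)) ≤ 1 := by
    rw [Real.exp_le_one_iff]
    have : (0:ℝ) < 2 * τ ^ 2 := by positivity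
    apply div_nonpos_of_nonpos_of_nonneg _ this.le
    simp [sq_nonneg]
  calc gphi d τ z ≤ gc d τ * 1 := by
        apply mul_le_mul_of_nonneg_left h1 (gc_pos hτ).le
    _ = gc d τ := mul_one _

lemma exp_bound_one (hτ : 0 < τ) {t : ℝ} (ht : 0 ≤ t) :
    t * Real.exp (-t ^ 2 / (2 * τ ^ 2)) ≤ τ := by
  have h2 : (0:ℝ) < 2 * τ ^ 2 := by positivity
  have key : t ≤ τ * Real.exp (t ^ 2 / (2 * τ ^ 2)) := by
    have h3 : 1 + t ^ 2 / (2 * τ ^ 2) ≤ Real.exp (t ^ 2 / (2 * τ ^ 2)) := by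
      linarith [Real.add_one_le_exp (t ^ 2 / (2 * τ ^ 2))]
    have h4 : t / τ ≤ 1 + t ^ 2 / (2 * τ ^ 2) := by
      rw [div_le_iff₀ hτ]
      have h5 : 0 ≤ (t - τ) ^ 2 / (2 * τ) + τ / 2 := by positivity
      have h6 : (1 + t ^ 2 / (2 * τ ^ 2)) * τ - t = (t - τ) ^ 2 / (2 * τ) + τ / 2 := by
        field_simp
        ring
      linarith
    calc t = τ * (t / τ) := by field_simp
      _ ≤ τ * (1 + t ^ 2 / (2 * τ ^ 2)) := by
          exact mul_le_mul_of_nonneg_left h4 hτ.le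
      _ ≤ τ * Real.exp (t ^ 2 / (2 * τ ^ 2)) := mul_le_mul_of_nonneg_left h3 hτ.le
  have hepos := Real.exp_pos (t ^ 2 / (2 * τ ^ 2))
  have : t * Real.exp (-t ^ 2 / (2 * τ ^ 2)) = t / Real.exp (t ^ 2 / (2 * τ ^ 2)) := by
    rw [neg_div, Real.exp_neg]
    ring
  rw [this, div_le_iff₀ hepos]
  exact key.trans_eq (by ring)

lemma exp_bound_two (hτ : 0 < τ) {t : ℝ} (ht : 0 ≤ t) :
    t ^ 2 * Real.exp (-t ^ 2 / (2 * τ ^ 2)) ≤ 2 * τ ^ 2 := by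
  have h2 : (0:ℝ) < 2 * τ ^ 2 := by positivity
  have key : t ^ 2 ≤ 2 * τ ^ 2 * Real.exp (t ^ 2 / (2 * τ ^ 2)) := by
    have h3 : t ^ 2 / (2 * τ ^ 2) ≤ Real.exp (t ^ 2 / (2 * τ ^ 2)) := by
      linarith [Real.add_one_le_exp (t ^ 2 / (2 * τ ^ 2))]
    calc t ^ 2 = 2 * τ ^ 2 * (t ^ 2 / (2 * τ ^ 2)) := by field_simp
      _ ≤ 2 * τ ^ 2 * Real.exp (t ^ 2 / (2 * τ ^ 2)) := mul_le_mul_of_nonneg_left h3 h2.le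
  have hepos := Real.exp_pos (t ^ 2 / (2 * τ ^ 2))
  have heq : t ^ 2 * Real.exp (-t ^ 2 / (2 * τ ^ 2)) = t ^ 2 / Real.exp (t ^ 2 / (2 * τ ^ 2)) := by
    rw [neg_div, Real.exp_neg]; ring
  rw [heq, div_le_iff₀ hepos]
  exact key.trans_eq (by ring)

lemma norm_mul_gphi_le (hτ : 0 < τ) (z : EuclideanSpace ℝ (Fin d)) :
    ‖z‖ * gphi d τ z ≤ gc d τ * τ := by
  have := exp_bound_one hτ (norm_nonneg z)
  unfold gphi
  calc ‖z‖ * ((2 * Real.pi * τ ^ 2) ^ (-(d : ℝ) / 2) * Real.exp (-‖z‖ ^ 2 / (2 * τ ^ 2)))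
      = gc d τ * (‖z‖ * Real.exp (-‖z‖ ^ 2 / (2 * τ ^ 2))) := by rw [gc]; ring
    _ ≤ gc d τ * τ := mul_le_mul_of_nonneg_left this (gc_pos hτ).le

lemma sq_norm_mul_gphi_le (hτ : 0 < τ) (z : EuclideanSpace ℝ (Fin d)) :
    ‖z‖ ^ 2 * gphi d τ z ≤ gc d τ * (2 * τ ^ 2) := by
  have := exp_bound_two hτ (norm_nonneg z)
  unfold gphi
  calc ‖z‖ ^ 2 * ((2 * Real.pi * τ ^ 2) ^ (-(d : ℝ) / 2) * Real.exp (-‖z‖ ^ 2 / (2 * τ ^ 2)))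
      = gc d τ * (‖z‖ ^ 2 * Real.exp (-‖z‖ ^ 2 / (2 * τ ^ 2))) := by rw [gc]; ring
    _ ≤ gc d τ * (2 * τ ^ 2) := mul_le_mul_of_nonneg_left this (gc_pos hτ).le

lemma continuous_gphi : Continuous (gphi d τ) := by
  unfold gphi
  fun_prop

end ScoreAux
namespace ScoreAux2
open ScoreAux
variable {d : ℕ} {τ : ℝ}

noncomputable def Dphi (d : ℕ) (τ : ℝ) (x y : EuclideanSpace ℝ (Fin d)) :
    EuclideanSpace ℝ (Fin d) →L[ℝ] ℝ :=
  (-(τ ^ 2)⁻¹ * gphi d τ (x - y)) • innerSL ℝ (x - y)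

lemma hasFDerivAt_gphi_sub (hτ : 0 < τ) (y x : EuclideanSpace ℝ (Fin d)) :
    HasFDerivAt (fun x => gphi d τ (x - y)) (Dphi d τ x y) x := by
  have h1 : HasFDerivAt (fun x : EuclideanSpace ℝ (Fin d) => x - y)
      (ContinuousLinearMap.id ℝ (EuclideanSpace ℝ (Fin d))) x :=
    (hasFDerivAt_id x).sub_const y
  have h2 := h1.norm_sq
  have h3 := ((h2.const_mul (-(2 * τ ^ 2))⁻¹).exp).const_mul (gc d τ)
  have hfun : (fun x : EuclideanSpace ℝ (Fin d) =>
      gc d τ * Real.exp ((-(2 * τ ^ 2))⁻¹ * ‖x - y‖ ^ 2)) = fun x => gphi d τ (x - y) := by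
    funext z
    rw [gphi, gc]
    congr 1
    ring
  rw [hfun] at h3
  have harg : (-(2 * τ ^ 2))⁻¹ * ‖x - y‖ ^ 2 = -‖x - y‖ ^ 2 / (2 * τ ^ 2) := by ring
  refine h3.congr_fderiv ?_
  ext v
  simp only [Dphi, harg, gphi, gc, ContinuousLinearMap.smul_apply, ContinuousLinearMap.coe_smul',
    Pi.smul_apply, ContinuousLinearMap.coe_comp', Function.comp_apply,
    ContinuousLinearMap.coe_id', id_eq, innerSL_apply_apply, smul_eq_mul, two_smul, ContinuousLinearMap.add_apply]
  ring

end ScoreAux2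
namespace ScoreAux3
open ScoreAux ScoreAux2

variable {d : ℕ} {τ : ℝ} {ν : Measure (EuclideanSpace ℝ (Fin d))}

lemma integrable_bdd {G : Type*} [NormedAddCommGroup G] [IsFiniteMeasure ν]
    {f : EuclideanSpace ℝ (Fin d) → G} (hf : AEStronglyMeasurable f ν) {M : ℝ}
    (h : ∀ᵐ y ∂ν, ‖f y‖ ≤ M) : Integrable f ν :=
  (integrable_const M).mono' hf h

lemma cont_gphi_sub (x : EuclideanSpace ℝ (Fin d)) :
    Continuous fun y => gphi d τ (x - y) :=
  continuous_gphi.comp (continuous_const.sub continuous_id)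

lemma cont_Dphi (x : EuclideanSpace ℝ (Fin d)) :
    Continuous fun y => Dphi d τ x y := by
  unfold Dphi
  exact (continuous_const.mul (cont_gphi_sub x)).smul
    ((innerSL ℝ).continuous.comp (continuous_const.sub continuous_id))

lemma norm_Dphi_le (hτ : 0 < τ) (x y : EuclideanSpace ℝ (Fin d)) :
    ‖Dphi d τ x y‖ ≤ (τ ^ 2)⁻¹ * (gc d τ * τ) := by
  have h0 := gphi_pos (d := d) hτ (x - y)
  have h2 : (0:ℝ) < (τ ^ 2)⁻¹ := inv_pos.mpr (pow_pos hτ 2)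
  refine ContinuousLinearMap.opNorm_le_bound _
    (mul_nonneg h2.le (mul_nonneg (gc_pos hτ).le hτ.le)) fun v => ?_
  rw [Dphi]
  simp only [ContinuousLinearMap.smul_apply, innerSL_apply_apply, smul_eq_mul, Real.norm_eq_abs,
    abs_mul]
  have hCS := abs_real_inner_le_norm (x - y) v
  rw [abs_neg, abs_inv, abs_of_pos (pow_pos hτ 2), abs_of_pos h0]
  calc (τ ^ 2)⁻¹ * gphi d τ (x - y) * |inner ℝ (x - y) v|
      ≤ (τ ^ 2)⁻¹ * gphi d τ (x - y) * (‖x - y‖ * ‖v‖) := by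
        refine mul_le_mul_of_nonneg_left hCS (by positivity)
    _ = (τ ^ 2)⁻¹ * (‖x - y‖ * gphi d τ (x - y)) * ‖v‖ := by ring
    _ ≤ (τ ^ 2)⁻¹ * (gc d τ * τ) * ‖v‖ := by
        refine mul_le_mul_of_nonneg_right (mul_le_mul_of_nonneg_left
          (norm_mul_gphi_le hτ (x - y)) h2.le) (norm_nonneg v)

lemma integrable_gphi [IsFiniteMeasure ν] (hτ : 0 < τ) (x : EuclideanSpace ℝ (Fin d)) :
    Integrable (fun y => gphi d τ (x - y)) ν :=
  integrable_bdd (cont_gphi_sub x).aestronglyMeasurable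
    (Filter.Eventually.of_forall fun y => by
      rw [Real.norm_eq_abs, abs_of_pos (gphi_pos hτ _)]; exact gphi_le hτ _)

lemma integrable_Dphi [IsFiniteMeasure ν] (hτ : 0 < τ) (x : EuclideanSpace ℝ (Fin d)) :
    Integrable (fun y => Dphi d τ x y) ν :=
  integrable_bdd (cont_Dphi x).aestronglyMeasurable
    (Filter.Eventually.of_forall fun y => norm_Dphi_le hτ x y)

noncomputable def Vvec (d : ℕ) (τ : ℝ) (ν : Measure (EuclideanSpace ℝ (Fin d)))
    (x : EuclideanSpace ℝ (Fin d)) : EuclideanSpace ℝ (Fin d) :=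
  ∫ y, ((τ ^ 2)⁻¹ * gphi d τ (x - y)) • (y - x) ∂ν

lemma cont_F2 (x : EuclideanSpace ℝ (Fin d)) :
    Continuous fun y : EuclideanSpace ℝ (Fin d) =>
      ((τ ^ 2)⁻¹ * gphi d τ (x - y)) • (y - x) :=
  (continuous_const.mul (cont_gphi_sub x)).smul (continuous_id.sub continuous_const)

lemma norm_F2_le (hτ : 0 < τ) (x y : EuclideanSpace ℝ (Fin d)) :
    ‖((τ ^ 2)⁻¹ * gphi d τ (x - y)) • (y - x)‖ ≤ (τ ^ 2)⁻¹ * (gc d τ * τ) := by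
  rw [norm_smul]
  have h0 := gphi_pos (d := d) hτ (x - y)
  have h2 : (0:ℝ) < (τ^2)⁻¹ := inv_pos.mpr (pow_pos hτ 2)
  rw [Real.norm_eq_abs, abs_of_pos (by positivity)]
  have h3 : ‖y - x‖ = ‖x - y‖ := by rw [← norm_neg]; congr 1; abel
  rw [h3, mul_assoc]
  have h4 := norm_mul_gphi_le hτ (x - y)
  have : gphi d τ (x - y) * ‖x - y‖ ≤ gc d τ * τ := by
    rw [mul_comm]; exact h4
  exact mul_le_mul_of_nonneg_left this h2.le

lemma integrable_F2 [IsFiniteMeasure ν] (hτ : 0 < τ) (x : EuclideanSpace ℝ (Fin d)) :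
    Integrable (fun y => ((τ ^ 2)⁻¹ * gphi d τ (x - y)) • (y - x)) ν :=
  integrable_bdd (cont_F2 x).aestronglyMeasurable
    (Filter.Eventually.of_forall fun y => norm_F2_le hτ x y)

lemma integral_Dphi_eq [IsFiniteMeasure ν] (hτ : 0 < τ) (x : EuclideanSpace ℝ (Fin d)) :
    ∫ y, Dphi d τ x y ∂ν = innerSL ℝ (Vvec d τ ν x) := by
  ext v
  rw [ContinuousLinearMap.integral_apply (integrable_Dphi hτ x)]
  rw [innerSL_apply_apply, Vvec, real_inner_comm]
  rw [← integral_inner (integrable_F2 hτ x) v]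
  congr 1
  funext y
  rw [Dphi]
  simp only [ContinuousLinearMap.smul_apply, innerSL_apply_apply, smul_eq_mul,
    real_inner_smul_right]
  rw [real_inner_comm]
  have : (x - y : EuclideanSpace ℝ (Fin d)) = -(y - x) := by abel
  rw [this, inner_neg_right]
  ring

lemma hasFDerivAt_pdens [IsFiniteMeasure ν] (hτ : 0 < τ) (x : EuclideanSpace ℝ (Fin d)) :
    HasFDerivAt (pdens d τ ν) (innerSL ℝ (Vvec d τ ν x)) x := by
  have h := hasFDerivAt_integral_of_dominated_of_fderiv_le
    (F := fun x y => gphi d τ (x - y)) (F' := fun x y => Dphi d τ x y)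
    (bound := fun _ => (τ ^ 2)⁻¹ * (gc d τ * τ)) (μ := ν) (x₀ := x)
    (Metric.ball_mem_nhds x one_pos)
    (Filter.Eventually.of_forall fun x' => (cont_gphi_sub x').aestronglyMeasurable)
    (integrable_gphi hτ x)
    (cont_Dphi x).aestronglyMeasurable
    (Filter.Eventually.of_forall fun y x' _ => norm_Dphi_le hτ x' y)
    (integrable_const _)
    (Filter.Eventually.of_forall fun y x' _ => hasFDerivAt_gphi_sub hτ y x')
  rw [integral_Dphi_eq hτ x] at h
  exact h

lemma pdens_pos [IsProbabilityMeasure ν] (hτ : 0 < τ) (x : EuclideanSpace ℝ (Fin d)) :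
    0 < pdens d τ ν x := by
  rw [pdens]
  rw [integral_pos_iff_support_of_nonneg_ae
    (Filter.Eventually.of_forall fun y => (gphi_pos hτ _).le) (integrable_gphi hτ x)]
  have : (Function.support fun y => gphi d τ (x - y)) = Set.univ := by
    ext y; simp [Function.support, (gphi_pos hτ (x - y)).ne']
  rw [this]
  simp

end ScoreAux3
namespace ScoreAux4
open ScoreAux ScoreAux2 ScoreAux3

variable {d : ℕ} {τ : ℝ} {ν : Measure (EuclideanSpace ℝ (Fin d))}

noncomputable def sfun (d : ℕ) (τ : ℝ) (ν : Measure (EuclideanSpace ℝ (Fin d)))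
    (x : EuclideanSpace ℝ (Fin d)) : EuclideanSpace ℝ (Fin d) :=
  (pdens d τ ν x)⁻¹ • Vvec d τ ν x

lemma score_eq [IsProbabilityMeasure ν] (hτ : 0 < τ) : score d τ ν = sfun d τ ν := by
  funext x
  have hP := hasFDerivAt_pdens (ν := ν) hτ x
  have hpos := pdens_pos (ν := ν) hτ x
  have hlog : HasFDerivAt (fun z => Real.log (pdens d τ ν z))
      ((pdens d τ ν x)⁻¹ • innerSL ℝ (Vvec d τ ν x)) x :=
    (Real.hasDerivAt_log hpos.ne').comp_hasFDerivAt x hP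
  have hgrad : HasGradientAt (fun z => Real.log (pdens d τ ν z)) (sfun d τ ν x) x := by
    rw [hasGradientAt_iff_hasFDerivAt]
    refine hlog.congr_fderiv ?_
    ext v
    simp [InnerProductSpace.toDual_apply_apply, sfun, real_inner_smul_left]
  exact hgrad.gradient

noncomputable def Fp (d : ℕ) (τ : ℝ) (x y : EuclideanSpace ℝ (Fin d)) :
    EuclideanSpace ℝ (Fin d) →L[ℝ] EuclideanSpace ℝ (Fin d) :=
  ((τ ^ 2)⁻¹ * gphi d τ (x - y)) • (-ContinuousLinearMap.id ℝ (EuclideanSpace ℝ (Fin d))) +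
    ((τ ^ 2)⁻¹ • Dphi d τ x y).smulRight (y - x)

lemma hasFDerivAt_F2 (hτ : 0 < τ) (y x : EuclideanSpace ℝ (Fin d)) :
    HasFDerivAt (fun x => ((τ ^ 2)⁻¹ * gphi d τ (x - y)) • (y - x)) (Fp d τ x y) x := by
  have hc : HasFDerivAt (fun x => (τ ^ 2)⁻¹ * gphi d τ (x - y))
      ((τ ^ 2)⁻¹ • Dphi d τ x y) x := (hasFDerivAt_gphi_sub hτ y x).const_mul _
  have hg : HasFDerivAt (fun x : EuclideanSpace ℝ (Fin d) => y - x)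
      (-ContinuousLinearMap.id ℝ (EuclideanSpace ℝ (Fin d))) x :=
    (hasFDerivAt_id x).const_sub y
  exact hc.smul hg

lemma Fp_apply (x y v : EuclideanSpace ℝ (Fin d)) :
    Fp d τ x y v = -(((τ ^ 2)⁻¹ * gphi d τ (x - y)) • v) +
      ((τ ^ 2)⁻¹ * ((τ ^ 2)⁻¹ * gphi d τ (x - y)) * inner ℝ (y - x) v) •
        (y - x : EuclideanSpace ℝ (Fin d)) := by
  have h : (x - y : EuclideanSpace ℝ (Fin d)) = -(y - x) := by abel
  simp only [Fp, Dphi, ContinuousLinearMap.add_apply, ContinuousLinearMap.smul_apply,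
    ContinuousLinearMap.neg_apply, ContinuousLinearMap.coe_id', id_eq,
    ContinuousLinearMap.smulRight_apply, innerSL_apply_apply, smul_eq_mul]
  rw [h, inner_neg_left]
  congr 1
  · rw [smul_neg]
  · congr 1
    rw [gphi]
    rw [norm_neg]
    ring

lemma norm_Fp_le (hτ : 0 < τ) (x y : EuclideanSpace ℝ (Fin d)) :
    ‖Fp d τ x y‖ ≤ (τ ^ 2)⁻¹ * gc d τ * 3 := by
  have h0 := gphi_pos (d := d) hτ (x - y)
  have h2 : (0:ℝ) < (τ ^ 2)⁻¹ := inv_pos.mpr (pow_pos hτ 2)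
  refine ContinuousLinearMap.opNorm_le_bound _
    (by nlinarith [gc_pos (d := d) hτ]) fun v => ?_
  rw [Fp_apply]
  have hyx : ‖(y - x : EuclideanSpace ℝ (Fin d))‖ = ‖(x - y : EuclideanSpace ℝ (Fin d))‖ := by
    rw [← norm_neg]; congr 1; abel
  have hCS : |inner ℝ (y - x : EuclideanSpace ℝ (Fin d)) v| ≤ ‖(x - y : EuclideanSpace ℝ (Fin d))‖ * ‖v‖ := by
    rw [← hyx]; exact abs_real_inner_le_norm _ _
  calc ‖-(((τ ^ 2)⁻¹ * gphi d τ (x - y)) • v) +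
      ((τ ^ 2)⁻¹ * ((τ ^ 2)⁻¹ * gphi d τ (x - y)) * inner ℝ (y - x) v) •
        (y - x : EuclideanSpace ℝ (Fin d))‖
      ≤ ‖((τ ^ 2)⁻¹ * gphi d τ (x - y)) • v‖ +
        ‖((τ ^ 2)⁻¹ * ((τ ^ 2)⁻¹ * gphi d τ (x - y)) * inner ℝ (y - x) v) •
          (y - x : EuclideanSpace ℝ (Fin d))‖ := by
        have := norm_add_le (-(((τ ^ 2)⁻¹ * gphi d τ (x - y)) • v))
          (((τ ^ 2)⁻¹ * ((τ ^ 2)⁻¹ * gphi d τ (x - y)) * inner ℝ (y - x) v) •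
            (y - x : EuclideanSpace ℝ (Fin d)))
        rwa [norm_neg] at this
    _ ≤ (τ ^ 2)⁻¹ * gc d τ * 3 * ‖v‖ := by
        rw [norm_smul, norm_smul, hyx]
        simp only [Real.norm_eq_abs, abs_mul, abs_inv, abs_of_pos (pow_pos hτ 2),
          abs_of_pos h0]
        have e1 : (τ ^ 2)⁻¹ * gphi d τ (x - y) * ‖v‖ ≤ (τ ^ 2)⁻¹ * gc d τ * ‖v‖ := by
          have := gphi_le (d := d) hτ (x - y)
          exact mul_le_mul_of_nonneg_right
            (mul_le_mul_of_nonneg_left this h2.le) (norm_nonneg v)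
        have e2 : (τ ^ 2)⁻¹ * ((τ ^ 2)⁻¹ * gphi d τ (x - y)) * |inner ℝ (y - x) v| *
            ‖(x - y : EuclideanSpace ℝ (Fin d))‖ ≤ (τ ^ 2)⁻¹ * gc d τ * 2 * ‖v‖ := by
          have hb := sq_norm_mul_gphi_le (d := d) hτ (x - y)
          have hn := norm_nonneg (x - y : EuclideanSpace ℝ (Fin d))
          have hv := norm_nonneg v
          have habs : (0:ℝ) ≤ |inner ℝ (y - x : EuclideanSpace ℝ (Fin d)) v| := abs_nonneg _
          calc (τ ^ 2)⁻¹ * ((τ ^ 2)⁻¹ * gphi d τ (x - y)) * |inner ℝ (y - x) v| *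
              ‖(x - y : EuclideanSpace ℝ (Fin d))‖
              ≤ (τ ^ 2)⁻¹ * ((τ ^ 2)⁻¹ * gphi d τ (x - y)) *
                (‖(x - y : EuclideanSpace ℝ (Fin d))‖ * ‖v‖) *
                ‖(x - y : EuclideanSpace ℝ (Fin d))‖ :=
                mul_le_mul_of_nonneg_right (mul_le_mul_of_nonneg_left hCS
                  (mul_nonneg h2.le (mul_nonneg h2.le h0.le))) hn
            _ = (τ ^ 2)⁻¹ * (τ ^ 2)⁻¹ * (‖(x - y : EuclideanSpace ℝ (Fin d))‖ ^ 2 *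
                gphi d τ (x - y)) * ‖v‖ := by ring
            _ ≤ (τ ^ 2)⁻¹ * (τ ^ 2)⁻¹ * (gc d τ * (2 * τ ^ 2)) * ‖v‖ :=
                mul_le_mul_of_nonneg_right (mul_le_mul_of_nonneg_left hb
                  (mul_nonneg h2.le h2.le)) hv
            _ = (τ ^ 2)⁻¹ * gc d τ * 2 * ((τ ^ 2)⁻¹ * τ ^ 2) * ‖v‖ := by ring
            _ = (τ ^ 2)⁻¹ * gc d τ * 2 * ‖v‖ := by
                rw [inv_mul_cancel₀ (pow_pos hτ 2).ne']; ring
        nlinarith [e1, e2]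

end ScoreAux4
namespace ScoreAux5
open ScoreAux ScoreAux2 ScoreAux3 ScoreAux4

variable {d : ℕ} {τ : ℝ} {ν : Measure (EuclideanSpace ℝ (Fin d))}

lemma cont_Fp (x : EuclideanSpace ℝ (Fin d)) : Continuous fun y => Fp d τ x y := by
  apply Continuous.add
  · exact (continuous_const.mul (cont_gphi_sub x)).smul continuous_const
  · have h1 : Continuous fun y : EuclideanSpace ℝ (Fin d) =>
        (τ ^ 2)⁻¹ • Dphi d τ x y := (cont_Dphi (τ := τ) x).const_smul ((τ ^ 2)⁻¹)
    exact (ContinuousLinearMap.smulRightL ℝ _ _).continuous₂.comp₂ h1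
      (continuous_id.sub continuous_const)

lemma integrable_Fp [IsFiniteMeasure ν] (hτ : 0 < τ) (x : EuclideanSpace ℝ (Fin d)) :
    Integrable (fun y => Fp d τ x y) ν :=
  integrable_bdd (cont_Fp x).aestronglyMeasurable
    (Filter.Eventually.of_forall fun y => norm_Fp_le hτ x y)

lemma hasFDerivAt_Vvec [IsFiniteMeasure ν] (hτ : 0 < τ) (x : EuclideanSpace ℝ (Fin d)) :
    HasFDerivAt (Vvec d τ ν) (∫ y, Fp d τ x y ∂ν) x := by
  exact hasFDerivAt_integral_of_dominated_of_fderiv_le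
    (F := fun x y => ((τ ^ 2)⁻¹ * gphi d τ (x - y)) • (y - x))
    (F' := fun x y => Fp d τ x y)
    (bound := fun _ => (τ ^ 2)⁻¹ * gc d τ * 3) (μ := ν) (x₀ := x)
    (Metric.ball_mem_nhds x one_pos)
    (Filter.Eventually.of_forall fun x' => (cont_F2 x').aestronglyMeasurable)
    (integrable_F2 hτ x)
    (cont_Fp x).aestronglyMeasurable
    (Filter.Eventually.of_forall fun y x' _ => norm_Fp_le hτ x' y)
    (integrable_const _)
    (Filter.Eventually.of_forall fun y x' _ => hasFDerivAt_F2 hτ y x')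

noncomputable def Ds (d : ℕ) (τ : ℝ) (ν : Measure (EuclideanSpace ℝ (Fin d)))
    (x : EuclideanSpace ℝ (Fin d)) :
    EuclideanSpace ℝ (Fin d) →L[ℝ] EuclideanSpace ℝ (Fin d) :=
  (pdens d τ ν x)⁻¹ • (∫ y, Fp d τ x y ∂ν) +
    ((-(pdens d τ ν x ^ 2)⁻¹) • innerSL ℝ (Vvec d τ ν x)).smulRight (Vvec d τ ν x)

lemma hasFDerivAt_sfun [IsProbabilityMeasure ν] (hτ : 0 < τ) (x : EuclideanSpace ℝ (Fin d)) :
    HasFDerivAt (sfun d τ ν) (Ds d τ ν x) x := by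
  have hP := hasFDerivAt_pdens (ν := ν) hτ x
  have hpos := pdens_pos (ν := ν) hτ x
  have hinv : HasFDerivAt (fun z => (pdens d τ ν z)⁻¹)
      ((-(pdens d τ ν x ^ 2)⁻¹) • innerSL ℝ (Vvec d τ ν x)) x :=
    (hasDerivAt_inv hpos.ne').comp_hasFDerivAt x hP
  exact hinv.smul (hasFDerivAt_Vvec hτ x)

end ScoreAux5
namespace ScoreAux6
open ScoreAux ScoreAux2 ScoreAux3 ScoreAux4 ScoreAux5

variable {d : ℕ} {τ R : ℝ} {ν : Measure (EuclideanSpace ℝ (Fin d))}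

lemma ae_sq_norm_le (hsupp : ∀ᵐ y ∂ν, ∀ i, |y i| ≤ R) :
    ∀ᵐ y ∂ν, ‖y‖ ^ 2 ≤ R ^ 2 * d :=
  hsupp.mono fun y hy => by
    rw [EuclideanSpace.norm_eq, Real.sq_sqrt (by positivity)]
    calc ∑ i, ‖y i‖ ^ 2 ≤ ∑ _i : Fin d, R ^ 2 :=
          Finset.sum_le_sum fun i _ => by
            have h := hy i
            rw [Real.norm_eq_abs]
            nlinarith [abs_nonneg (y i)]
      _ = R ^ 2 * d := by simp [Finset.sum_const, mul_comm]

lemma integrable_g_smul [IsFiniteMeasure ν] (hτ : 0 < τ) (x : EuclideanSpace ℝ (Fin d))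
    {G : Type*} [NormedAddCommGroup G] [NormedSpace ℝ G]
    {f : EuclideanSpace ℝ (Fin d) → G} (hf : Continuous f) {M : ℝ}
    (hM : ∀ᵐ y ∂ν, ‖f y‖ ≤ M) :
    Integrable (fun y => gphi d τ (x - y) • f y) ν :=
  integrable_bdd ((cont_gphi_sub x).smul hf).aestronglyMeasurable (M := gc d τ * M)
    (hM.mono fun y hy => by
      rw [norm_smul, Real.norm_eq_abs, abs_of_pos (gphi_pos hτ _)]
      exact mul_le_mul (gphi_le hτ _) hy (norm_nonneg _) (gc_pos hτ).le)

lemma integrable_g_mul [IsFiniteMeasure ν] (hτ : 0 < τ) (x : EuclideanSpace ℝ (Fin d))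
    {f : EuclideanSpace ℝ (Fin d) → ℝ} (hf : Continuous f) {M : ℝ}
    (hM : ∀ᵐ y ∂ν, ‖f y‖ ≤ M) :
    Integrable (fun y => gphi d τ (x - y) * f y) ν :=
  integrable_g_smul hτ x hf hM

set_option maxHeartbeats 1000000 in
lemma norm_Ds_le [IsProbabilityMeasure ν] (hτ : 0 < τ) (hR : 0 < R)
    (hsupp : ∀ᵐ y ∂ν, ∀ i, |y i| ≤ R) (x : EuclideanSpace ℝ (Fin d)) :
    ‖Ds d τ ν x‖ ≤ 1 / τ ^ 2 + R ^ 2 * d / τ ^ 4 := by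
  have hP : 0 < pdens d τ ν x := pdens_pos hτ x
  set P := pdens d τ ν x with hPdef
  set V := Vvec d τ ν x with hVdef
  set a : EuclideanSpace ℝ (Fin d) := (τ ^ 2 / P) • V with hadef
  set b : EuclideanSpace ℝ (Fin d) := x + a with hbdef
  have hτ2 : (0:ℝ) < τ ^ 2 := pow_pos hτ 2
  -- a.e. norm bound
  have hae2 : ∀ᵐ y ∂ν, ‖y‖ ^ 2 ≤ R ^ 2 * d := ae_sq_norm_le hsupp
  set S : ℝ := Real.sqrt (R ^ 2 * d) with hSdef
  have hS0 : (0:ℝ) ≤ S := Real.sqrt_nonneg _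
  have haeS : ∀ᵐ y ∂ν, ‖y‖ ≤ S := hae2.mono fun y hy =>
    (Real.le_sqrt (norm_nonneg _) (by positivity)).mpr hy
  -- integrable functions
  have i1 : Integrable (fun y => gphi d τ (x - y)) ν := integrable_gphi hτ x
  have i2 : Integrable (fun y => gphi d τ (x - y) • (y - x)) ν :=
    integrable_g_smul hτ x (continuous_id.sub continuous_const) (M := S + ‖x‖)
      (haeS.mono fun y hy => (norm_sub_le y x).trans (add_le_add_left hy ‖x‖))
  have i3 : Integrable (fun y => gphi d τ (x - y) • y) ν :=
    integrable_g_smul hτ x continuous_id haeS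
  have i4 : Integrable (fun y => gphi d τ (x - y) * inner ℝ y b) ν :=
    integrable_g_mul hτ x (continuous_id.inner continuous_const) (M := S * ‖b‖)
      (haeS.mono fun y hy => by
        rw [Real.norm_eq_abs]
        exact (abs_real_inner_le_norm y b).trans
          (mul_le_mul_of_nonneg_right hy (norm_nonneg b)))
  have i5 : Integrable (fun y => gphi d τ (x - y) * ‖y‖ ^ 2) ν :=
    integrable_g_mul hτ x (by fun_prop) (M := R ^ 2 * d)
      (hae2.mono fun y hy => by rwa [Real.norm_eq_abs, abs_of_nonneg (by positivity)])
  have i6 : Integrable (fun y => gphi d τ (x - y) * ‖y - b‖ ^ 2) ν :=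
    integrable_g_mul hτ x (by fun_prop) (M := (S + ‖b‖) ^ 2)
      (haeS.mono fun y hy => by
        rw [Real.norm_eq_abs, abs_of_nonneg (by positivity)]
        have h1 : ‖y - b‖ ≤ S + ‖b‖ := (norm_sub_le y b).trans (by linarith)
        nlinarith [norm_nonneg (y - b)])
  -- first moment identities
  have e1 : ∫ y, gphi d τ (x - y) • (y - x) ∂ν = P • a := by
    have h1 : ∀ y : EuclideanSpace ℝ (Fin d), gphi d τ (x - y) • (y - x) =
        (τ ^ 2 : ℝ) • (((τ ^ 2)⁻¹ * gphi d τ (x - y)) • (y - x)) := fun y => by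
      rw [smul_smul]
      congr 1
      field_simp
    simp_rw [h1]
    rw [integral_smul]
    have h2 : ∫ y, ((τ ^ 2)⁻¹ * gphi d τ (x - y)) • (y - x) ∂ν = V := rfl
    rw [h2, hadef, smul_smul]
    congr 1
    field_simp
  have e2 : ∫ y, gphi d τ (x - y) • y ∂ν = P • b := by
    have h1 : ∀ y : EuclideanSpace ℝ (Fin d), gphi d τ (x - y) • y =
        gphi d τ (x - y) • (y - x) + gphi d τ (x - y) • x := fun y => by
      rw [← smul_add]
      congr 1
      abel
    simp_rw [h1]
    rw [integral_add i2 (i1.smul_const x), e1, integral_smul_const]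
    have h2 : ∫ y, gphi d τ (x - y) ∂ν = P := rfl
    rw [h2, hbdef, smul_add]
    abel
  -- second moment bound
  have q1 : ∫ y, gphi d τ (x - y) * inner ℝ y b ∂ν = P * ‖b‖ ^ 2 := by
    have h1 : ∀ y : EuclideanSpace ℝ (Fin d), gphi d τ (x - y) * inner ℝ y b =
        inner ℝ b (gphi d τ (x - y) • y) := fun y => by
      rw [real_inner_smul_right, real_inner_comm]
    simp_rw [h1]
    rw [integral_inner i3 b, e2, real_inner_smul_right, real_inner_self_eq_norm_sq]
  have e4 : ∫ y, gphi d τ (x - y) * ‖y - b‖ ^ 2 ∂ν ≤ R ^ 2 * d * P := by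
    have h1 : ∀ y : EuclideanSpace ℝ (Fin d), gphi d τ (x - y) * ‖y - b‖ ^ 2 =
        gphi d τ (x - y) * ‖y‖ ^ 2 - 2 * (gphi d τ (x - y) * inner ℝ y b) +
          gphi d τ (x - y) * ‖b‖ ^ 2 := fun y => by
      rw [norm_sub_sq_real]
      ring
    simp_rw [h1]
    have ia1 : Integrable (fun y => gphi d τ (x - y) * ‖y‖ ^ 2 -
        2 * (gphi d τ (x - y) * inner ℝ y b)) ν := by exact i5.sub (i4.const_mul 2)
    have ia2 : Integrable (fun y => gphi d τ (x - y) * ‖b‖ ^ 2) ν := i1.mul_const _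
    rw [integral_add ia1 ia2, integral_sub i5 (i4.const_mul 2), integral_const_mul, q1,
      integral_mul_const]
    have h2 : ∫ y, gphi d τ (x - y) ∂ν = P := rfl
    rw [h2]
    have h3 : ∫ y, gphi d τ (x - y) * ‖y‖ ^ 2 ∂ν ≤ R ^ 2 * d * P := by
      have hb : Integrable (fun y => gphi d τ (x - y) * (R ^ 2 * d)) ν := i1.mul_const _
      have := integral_mono_ae i5 hb (hae2.mono fun y hy =>
        mul_le_mul_of_nonneg_left hy (gphi_pos hτ _).le)
      rwa [integral_mul_const, h2, mul_comm P] at this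
    nlinarith [mul_nonneg hP.le (sq_nonneg ‖b‖)]
  -- operator norm bound
  refine ContinuousLinearMap.opNorm_le_bound _ (by positivity) fun v => ?_
  -- integrable integrands depending on v
  have i7 : Integrable (fun y => (gphi d τ (x - y) * inner ℝ (y - x) v) •
      (y - x : EuclideanSpace ℝ (Fin d))) ν := by
    refine integrable_bdd ?_ (M := gc d τ * (2 * τ ^ 2) * ‖v‖)
      (Filter.Eventually.of_forall fun y => ?_)
    · exact (((cont_gphi_sub x).mul ((continuous_id.sub continuous_const).inner
        continuous_const)).smul (continuous_id.sub continuous_const)).aestronglyMeasurable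
    · rw [norm_smul, Real.norm_eq_abs, abs_mul, abs_of_pos (gphi_pos hτ _)]
      have hxy : ‖(y - x : EuclideanSpace ℝ (Fin d))‖ = ‖(x - y : EuclideanSpace ℝ (Fin d))‖ := by
        rw [← norm_neg]; congr 1; abel
      have hCS : |inner ℝ (y - x : EuclideanSpace ℝ (Fin d)) v| ≤
          ‖(y - x : EuclideanSpace ℝ (Fin d))‖ * ‖v‖ := abs_real_inner_le_norm _ _
      have hb2 := sq_norm_mul_gphi_le (d := d) hτ (x - y)
      calc gphi d τ (x - y) * |inner ℝ (y - x) v| * ‖(y - x : EuclideanSpace ℝ (Fin d))‖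
          ≤ gphi d τ (x - y) * (‖(y - x : EuclideanSpace ℝ (Fin d))‖ * ‖v‖) *
            ‖(y - x : EuclideanSpace ℝ (Fin d))‖ :=
            mul_le_mul_of_nonneg_right (mul_le_mul_of_nonneg_left hCS
              (gphi_pos hτ _).le) (norm_nonneg _)
        _ = ‖(x - y : EuclideanSpace ℝ (Fin d))‖ ^ 2 * gphi d τ (x - y) * ‖v‖ := by
            rw [hxy]; ring
        _ ≤ gc d τ * (2 * τ ^ 2) * ‖v‖ :=
            mul_le_mul_of_nonneg_right hb2 (norm_nonneg v)
  have i8 : Integrable (fun y => (gphi d τ (x - y) * inner ℝ (y - b) v) •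
      (y - b : EuclideanSpace ℝ (Fin d))) ν := by
    refine integrable_bdd ?_ (M := gc d τ * (S + ‖b‖) ^ 2 * ‖v‖) ?_
    · exact (((cont_gphi_sub x).mul ((continuous_id.sub continuous_const).inner
        continuous_const)).smul (continuous_id.sub continuous_const)).aestronglyMeasurable
    · refine haeS.mono fun y hy => ?_
      have h1 : ‖(y - b : EuclideanSpace ℝ (Fin d))‖ ≤ S + ‖b‖ :=
        (norm_sub_le y b).trans (by linarith)
      have hCS : |inner ℝ (y - b : EuclideanSpace ℝ (Fin d)) v| ≤
          ‖(y - b : EuclideanSpace ℝ (Fin d))‖ * ‖v‖ := abs_real_inner_le_norm _ _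
      rw [norm_smul, Real.norm_eq_abs, abs_mul, abs_of_pos (gphi_pos hτ _)]
      have hg := gphi_le (d := d) hτ (x - y)
      have hg0 := gphi_pos (d := d) hτ (x - y)
      have hn0 := norm_nonneg (y - b : EuclideanSpace ℝ (Fin d))
      have hv0 := norm_nonneg v
      calc gphi d τ (x - y) * |inner ℝ (y - b) v| * ‖(y - b : EuclideanSpace ℝ (Fin d))‖
          ≤ gphi d τ (x - y) * (‖(y - b : EuclideanSpace ℝ (Fin d))‖ * ‖v‖) *
            ‖(y - b : EuclideanSpace ℝ (Fin d))‖ :=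
            mul_le_mul_of_nonneg_right (mul_le_mul_of_nonneg_left hCS hg0.le) hn0
        _ = gphi d τ (x - y) * ‖(y - b : EuclideanSpace ℝ (Fin d))‖ ^ 2 * ‖v‖ := by ring
        _ ≤ gc d τ * (S + ‖b‖) ^ 2 * ‖v‖ := by
            refine mul_le_mul_of_nonneg_right ?_ hv0
            exact mul_le_mul hg (pow_le_pow_left₀ hn0 h1 2) (by positivity) (gc_pos hτ).le
  have i9 : Integrable (fun y => gphi d τ (x - y) * inner ℝ (y - x) v) ν :=
    integrable_g_mul hτ x ((continuous_id.sub continuous_const).inner continuous_const)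
      (M := (S + ‖x‖) * ‖v‖)
      (haeS.mono fun y hy => by
        rw [Real.norm_eq_abs]
        refine (abs_real_inner_le_norm _ _).trans ?_
        exact mul_le_mul_of_nonneg_right ((norm_sub_le y x).trans (by linarith))
          (norm_nonneg v))
  -- the integral J and K
  set J : EuclideanSpace ℝ (Fin d) :=
    ∫ y, (gphi d τ (x - y) * inner ℝ (y - x) v) • (y - x) ∂ν with hJdef
  set K : EuclideanSpace ℝ (Fin d) :=
    ∫ y, (gphi d τ (x - y) * inner ℝ (y - b) v) • (y - b) ∂ν with hKdef
  -- e3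
  have e3 : ∫ y, gphi d τ (x - y) * inner ℝ (y - x) v ∂ν = P * inner ℝ a v := by
    have h1 : ∀ y : EuclideanSpace ℝ (Fin d), gphi d τ (x - y) * inner ℝ (y - x) v =
        inner ℝ v (gphi d τ (x - y) • (y - x)) := fun y => by
      rw [real_inner_smul_right, real_inner_comm]
    simp_rw [h1]
    rw [integral_inner i2 v, e1, real_inner_smul_right, real_inner_comm]
  -- covariance identity
  have hJK : K = J - (P * inner ℝ a v) • a := by
    have h1 : ∀ y : EuclideanSpace ℝ (Fin d),
        (gphi d τ (x - y) * inner ℝ (y - b) v) • (y - b : EuclideanSpace ℝ (Fin d)) =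
          (gphi d τ (x - y) * inner ℝ (y - x) v) • (y - x)
            - (inner ℝ a v : ℝ) • (gphi d τ (x - y) • (y - x))
            - (gphi d τ (x - y) * inner ℝ (y - x) v) • a
            + gphi d τ (x - y) • ((inner ℝ a v : ℝ) • a) := fun y => by
      have hyb : (y - b : EuclideanSpace ℝ (Fin d)) = (y - x) - a := by
        rw [hbdef]; abel
      rw [hyb, inner_sub_left]
      module
    rw [hKdef]
    simp_rw [h1]
    have j2 : Integrable (fun y => (inner ℝ a v : ℝ) • (gphi d τ (x - y) • (y - x))) ν := by
      exact i2.smul (inner ℝ a v : ℝ)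
    have j3 : Integrable (fun y => (gphi d τ (x - y) * inner ℝ (y - x) v) • a) ν :=
      i9.smul_const a
    have j4 : Integrable (fun y => gphi d τ (x - y) • ((inner ℝ a v : ℝ) • a)) ν :=
      i1.smul_const _
    have j12 : Integrable (fun y => (gphi d τ (x - y) * inner ℝ (y - x) v) • (y - x) -
        (inner ℝ a v : ℝ) • (gphi d τ (x - y) • (y - x))) ν := by exact i7.sub j2
    have j123 : Integrable (fun y => ((gphi d τ (x - y) * inner ℝ (y - x) v) • (y - x) -
        (inner ℝ a v : ℝ) • (gphi d τ (x - y) • (y - x))) -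
        (gphi d τ (x - y) * inner ℝ (y - x) v) • a) ν := by exact j12.sub j3
    rw [integral_add j123 j4, integral_sub j12 j3, integral_sub i7 j2,
      integral_smul, integral_smul_const, integral_smul_const, e1, e3]
    have h2 : ∫ y, gphi d τ (x - y) ∂ν = P := rfl
    rw [h2, ← hJdef]
    match_scalars <;> ring
  -- evaluate Ds applied to v
  have hVa : V = (P * (τ ^ 2)⁻¹) • a := by
    rw [hadef, smul_smul]
    rw [show P * (τ ^ 2)⁻¹ * (τ ^ 2 / P) = 1 by field_simp]
    rw [one_smul]
  have hDv : Ds d τ ν x v = (-(τ ^ 2)⁻¹) • v + (((τ ^ 2)⁻¹ * (τ ^ 2)⁻¹) * P⁻¹) • K := by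
    rw [Ds]
    simp only [ContinuousLinearMap.add_apply, ContinuousLinearMap.smul_apply,
      ContinuousLinearMap.smulRight_apply, innerSL_apply_apply]
    rw [ContinuousLinearMap.integral_apply (integrable_Fp hτ x)]
    have h1 : ∀ y : EuclideanSpace ℝ (Fin d), Fp d τ x y v =
        (-((τ ^ 2)⁻¹ * gphi d τ (x - y))) • v +
          ((τ ^ 2)⁻¹ * (τ ^ 2)⁻¹) • ((gphi d τ (x - y) * inner ℝ (y - x) v) • (y - x)) := fun y => by
      rw [Fp_apply]
      module
    simp_rw [h1]
    have k1 : Integrable (fun y => (-((τ ^ 2)⁻¹ * gphi d τ (x - y))) • v) ν := by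
      have : Integrable (fun y => -((τ ^ 2)⁻¹ * gphi d τ (x - y))) ν := by
        exact (i1.const_mul ((τ ^ 2)⁻¹)).neg
      exact this.smul_const v
    have k2 : Integrable (fun y => ((τ ^ 2)⁻¹ * (τ ^ 2)⁻¹) •
        ((gphi d τ (x - y) * inner ℝ (y - x) v) • (y - x))) ν := by
      exact i7.smul ((τ ^ 2)⁻¹ * (τ ^ 2)⁻¹)
    rw [integral_add k1 k2, integral_smul, integral_smul_const]
    have h2 : ∫ y, -((τ ^ 2)⁻¹ * gphi d τ (x - y)) ∂ν = -((τ ^ 2)⁻¹ * P) := by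
      rw [integral_neg, integral_const_mul]
      rfl
    rw [h2, ← hJdef, ← hPdef, ← hVdef, hJK, hVa]
    have hPne : P ≠ 0 := hP.ne'
    have hτne : (τ ^ 2 : ℝ) ≠ 0 := hτ2.ne'
    rw [real_inner_smul_left]
    match_scalars
    all_goals try simp only [smul_eq_mul, neg_mul, mul_one]
    all_goals field_simp
    all_goals try ring
  -- final estimate
  rw [hDv]
  have hKnorm : ‖K‖ ≤ R ^ 2 * d * P * ‖v‖ := by
    have hb1 : Integrable (fun y => gphi d τ (x - y) * ‖y - b‖ ^ 2 * ‖v‖) ν := i6.mul_const _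
    have hpt : ∀ y : EuclideanSpace ℝ (Fin d),
        ‖(gphi d τ (x - y) * inner ℝ (y - b) v) • (y - b : EuclideanSpace ℝ (Fin d))‖ ≤
          gphi d τ (x - y) * ‖y - b‖ ^ 2 * ‖v‖ := fun y => by
      rw [norm_smul, Real.norm_eq_abs, abs_mul, abs_of_pos (gphi_pos hτ _)]
      have hCS : |inner ℝ (y - b : EuclideanSpace ℝ (Fin d)) v| ≤
          ‖(y - b : EuclideanSpace ℝ (Fin d))‖ * ‖v‖ := abs_real_inner_le_norm _ _
      have hg0 := (gphi_pos (d := d) hτ (x - y)).le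
      have hn0 := norm_nonneg (y - b : EuclideanSpace ℝ (Fin d))
      calc gphi d τ (x - y) * |inner ℝ (y - b) v| * ‖(y - b : EuclideanSpace ℝ (Fin d))‖
          ≤ gphi d τ (x - y) * (‖(y - b : EuclideanSpace ℝ (Fin d))‖ * ‖v‖) *
            ‖(y - b : EuclideanSpace ℝ (Fin d))‖ :=
            mul_le_mul_of_nonneg_right (mul_le_mul_of_nonneg_left hCS hg0) hn0
        _ = gphi d τ (x - y) * ‖(y - b : EuclideanSpace ℝ (Fin d))‖ ^ 2 * ‖v‖ := by ring
    have := norm_integral_le_of_norm_le hb1 (Filter.Eventually.of_forall hpt)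
    rw [hKdef]
    refine this.trans ?_
    rw [integral_mul_const]
    exact mul_le_mul_of_nonneg_right e4 (norm_nonneg v)
  calc ‖(-(τ ^ 2)⁻¹) • v + (((τ ^ 2)⁻¹ * (τ ^ 2)⁻¹) * P⁻¹) • K‖
      ≤ ‖(-(τ ^ 2)⁻¹) • v‖ + ‖(((τ ^ 2)⁻¹ * (τ ^ 2)⁻¹) * P⁻¹) • K‖ := norm_add_le _ _
    _ = (τ ^ 2)⁻¹ * ‖v‖ + ((τ ^ 2)⁻¹ * (τ ^ 2)⁻¹) * P⁻¹ * ‖K‖ := by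
        rw [norm_smul, norm_smul, Real.norm_eq_abs, Real.norm_eq_abs, abs_neg,
          abs_of_pos (inv_pos.mpr hτ2), abs_of_pos (by positivity)]
    _ ≤ (τ ^ 2)⁻¹ * ‖v‖ + ((τ ^ 2)⁻¹ * (τ ^ 2)⁻¹) * P⁻¹ * (R ^ 2 * d * P * ‖v‖) := by
        have : (0:ℝ) ≤ ((τ ^ 2)⁻¹ * (τ ^ 2)⁻¹) * P⁻¹ := by positivity
        nlinarith
    _ = (1 / τ ^ 2 + R ^ 2 * d / τ ^ 4) * ‖v‖ := by
        field_simp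
end ScoreAux6
/-- The score of a smoothed measure supported in `[-R,R]^d` is globally Lipschitz with constant
`1/τ² + R²d/τ⁴`, and the operator norm of its Jacobian obeys the same bound. -/
theorem stmt3 (d : ℕ) (hd : 1 ≤ d) (τ R : ℝ) (hτ : 0 < τ) (hR : 0 < R)
    (ν : Measure (EuclideanSpace ℝ (Fin d))) [IsProbabilityMeasure ν]
    (hsupp : ∀ᵐ y ∂ν, ∀ i, |y i| ≤ R) :
    LipschitzWith (Real.toNNReal (1 / τ ^ 2 + R ^ 2 * d / τ ^ 4)) (score d τ ν) ∧
    ∀ x, ‖fderiv ℝ (score d τ ν) x‖ ≤ 1 / τ ^ 2 + R ^ 2 * d / τ ^ 4 := by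
  have hs : score d τ ν = ScoreAux4.sfun d τ ν := ScoreAux4.score_eq hτ
  have hD : ∀ x, HasFDerivAt (score d τ ν) (ScoreAux5.Ds d τ ν x) x := fun x => by
    rw [hs]; exact ScoreAux5.hasFDerivAt_sfun hτ x
  have hbound : ∀ x, ‖ScoreAux5.Ds d τ ν x‖ ≤ 1 / τ ^ 2 + R ^ 2 * d / τ ^ 4 :=
    ScoreAux6.norm_Ds_le hτ hR hsupp
  have hlip : LipschitzWith (Real.toNNReal (1 / τ ^ 2 + R ^ 2 * d / τ ^ 4)) (score d τ ν) := by
    apply lipschitzWith_of_nnnorm_fderiv_le (𝕜 := ℝ) (fun x => (hD x).differentiableAt)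
    intro x
    rw [(hD x).fderiv, ← norm_toNNReal]
    exact Real.toNNReal_mono (hbound x)
  refine ⟨hlip, fun x => ?_⟩
  rw [(hD x).fderiv]
  exact hbound x
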